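/- The region D = {(S,V,I₁,I₂,R) ∈ ℝ₊⁵ : S+V+I₁+I₂+R ≤ B/ω} is positively invariant: if (S,V,I₁,I₂,R) : [0,∞) → ℝ⁵ is a differentiable solution of the SVI₁I₂R system whose components remain nonnegative for all t ≥ 0 and whose initial total population satisfies S(0)+V(0)+I₁(0)+I₂(0)+R(0) ≤ B/ω, then S(t)+V(t)+I₁(t)+I₂(t)+R(t) ≤ B/ω for all t ≥ 0. -/

import Mathlib

/-- Positive invariance of the region D = {(S,V,I₁,I₂,R) ∈ ℝ₊⁵ : S+V+I₁+I₂+R ≤ B/ω}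
for the SVI₁I₂R model: a solution with nonnegative components and initial total
population at most B/ω keeps total population at most B/ω for all t ≥ 0. -/
theorem region_positively_invariant
    (B ω β₁ β₂ α μ δ σ ω₁ ω₂ m r₁ r₂ : ℝ)
    (hB : 0 < B) (hω : 0 < ω) (hβ₁ : 0 < β₁) (hβ₂ : 0 < β₂) (hα : 0 < α)
    (hμ : 0 < μ) (hδ : 0 < δ) (hσ : σ ∈ Set.Ioo (0 : ℝ) 1)
    (hω₁ : 0 < ω₁) (hω₂ : 0 < ω₂) (hm : 0 < m) (hr₁ : 0 < r₁) (hr₂ : 0 < r₂)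
    (S V I₁ I₂ R : ℝ → ℝ)
    (hS : ∀ t, 0 ≤ t → HasDerivAt S
      (B - ω * S t - β₁ * S t * I₁ t - β₂ * S t * I₂ t - α * S t + μ * V t + δ * R t) t)
    (hV : ∀ t, 0 ≤ t → HasDerivAt V
      (-ω * V t - (1 - σ) * β₁ * V t * I₁ t - (1 - σ) * β₂ * V t * I₂ t + α * S t - μ * V t) t)
    (hI₁ : ∀ t, 0 ≤ t → HasDerivAt I₁
      (-(ω + ω₁ + m + r₁) * I₁ t + β₁ * S t * I₁ t + (1 - σ) * β₁ * V t * I₁ t) t)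
    (hI₂ : ∀ t, 0 ≤ t → HasDerivAt I₂
      (-(ω + ω₂ + r₂) * I₂ t + m * I₁ t + β₂ * S t * I₂ t + (1 - σ) * β₂ * V t * I₂ t) t)
    (hR : ∀ t, 0 ≤ t → HasDerivAt R (-(ω + δ) * R t + r₁ * I₁ t + r₂ * I₂ t) t)
    (hpos : ∀ t, 0 ≤ t → 0 ≤ S t ∧ 0 ≤ V t ∧ 0 ≤ I₁ t ∧ 0 ≤ I₂ t ∧ 0 ≤ R t)
    (hinit : S 0 + V 0 + I₁ 0 + I₂ 0 + R 0 ≤ B / ω) :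
    ∀ t, 0 ≤ t → S t + V t + I₁ t + I₂ t + R t ≤ B / ω := by
  set g : ℝ → ℝ := fun t =>
    (S t + V t + I₁ t + I₂ t + R t - B / ω) * Real.exp (ω * t) with hg_def
  have hg : ∀ t, 0 ≤ t →
      HasDerivAt g ((-(ω₁ * I₁ t) - ω₂ * I₂ t) * Real.exp (ω * t)) t := by
    intro t ht
    have hN := ((((hS t ht).add (hV t ht)).add (hI₁ t ht)).add (hI₂ t ht)).add (hR t ht)
    have hexp : HasDerivAt (fun t => Real.exp (ω * t)) (Real.exp (ω * t) * ω) t := by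
      simpa using ((hasDerivAt_id t).const_mul ω).exp
    have := (hN.sub_const (B / ω)).mul hexp
    convert this using 1
    · rfl
    · rfl
    · rfl
    · have hB' : B / ω * ω = B := div_mul_cancel₀ B hω.ne'
      simp only [Pi.add_apply]
      linear_combination (Real.exp (ω * t)) * hB'
  have hanti : AntitoneOn g (Set.Ici (0 : ℝ)) := by
    apply antitoneOn_of_deriv_nonpos (convex_Ici 0)
    · exact fun t ht => (hg t ht).continuousAt.continuousWithinAt
    · intro t ht
      rw [interior_Ici] at ht
      exact (hg t ht.le).differentiableAt.differentiableWithinAt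
    · intro t ht
      rw [interior_Ici] at ht
      rw [(hg t ht.le).deriv]
      have h := hpos t ht.le
      have : -(ω₁ * I₁ t) - ω₂ * I₂ t ≤ 0 := by nlinarith [h.2.2.1, h.2.2.2.1]
      exact mul_nonpos_of_nonpos_of_nonneg this (Real.exp_pos _).le
  intro t ht
  have h1 : g t ≤ g 0 := hanti (Set.self_mem_Ici) ht ht
  have h0 : g 0 ≤ 0 := by
    simp only [hg_def, mul_zero, Real.exp_zero, mul_one]
    linarith
  have hle : g t ≤ 0 := h1.trans h0
  have hexp : 0 < Real.exp (ω * t) := Real.exp_pos _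
  simp only [hg_def] at hle
  by_contra hcon
  push_neg at hcon
  exact absurd hle (not_le.mpr (mul_pos (sub_pos.mpr hcon) hexp))
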